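/- Let f : ℝⁿ → ℝ be C³ with ∇²f L-Lipschitz on B(x⁰, Δ̄), and let β > 0 be such that the nested-set Hessian ∇²_s f(x⁰; β·Id_n, β·Id_n) (i.e., S = T = β Id_n) is well-defined with all evaluation points in B(x⁰, Δ̄). Then ‖∇²_s f(x⁰; β Id, β Id) − ∇²f(x⁰)‖ ≤ (5/3) n^{3/2} L β. -/

import Mathlib

open Matrix Metric

/-- The induced 2-norm (operator norm) of a matrix. -/
noncomputable def opNorm {m n : ℕ} (A : Matrix (Fin m) (Fin n) ℝ) : ℝ :=
  ‖LinearMap.toContinuousLinearMap (Matrix.toEuclideanLin A)‖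

/-- The Hessian matrix of f at x. -/
noncomputable def hess {n : ℕ} (f : EuclideanSpace ℝ (Fin n) → ℝ)
    (x : EuclideanSpace ℝ (Fin n)) : Matrix (Fin n) (Fin n) ℝ :=
  Matrix.of fun i j =>
    iteratedFDeriv ℝ 2 f x ![EuclideanSpace.single i 1, EuclideanSpace.single j 1]

/-- The generalized simplex gradient ∇_s f(y;T) = (Tᵀ)† δ_f(y;T); since T has
full row rank, (Tᵀ)† = (T Tᵀ)⁻¹ T. -/
noncomputable def simplexGrad {n k : ℕ} (f : EuclideanSpace ℝ (Fin n) → ℝ)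
    (t : Fin k → EuclideanSpace ℝ (Fin n)) (T : Matrix (Fin n) (Fin k) ℝ)
    (y : EuclideanSpace ℝ (Fin n)) : Fin n → ℝ :=
  ((T * Tᵀ)⁻¹ * T).mulVec fun j => f (y + t j) - f y

/-- The nested-set Hessian ∇²_s f(x⁰;S,T) = (Sᵀ)† δ_{∇_s f}(x⁰;S,T); since S
has full row rank, (Sᵀ)† = (S Sᵀ)⁻¹ S.  The i-th row of δ_{∇_s f} is
(∇_s f(x⁰+sⁱ;T) − ∇_s f(x⁰;T))ᵀ. -/
noncomputable def nestedSetHessian {n m k : ℕ} (f : EuclideanSpace ℝ (Fin n) → ℝ)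
    (s : Fin m → EuclideanSpace ℝ (Fin n)) (S : Matrix (Fin n) (Fin m) ℝ)
    (t : Fin k → EuclideanSpace ℝ (Fin n)) (T : Matrix (Fin n) (Fin k) ℝ)
    (x0 : EuclideanSpace ℝ (Fin n)) : Matrix (Fin n) (Fin n) ℝ :=
  ((S * Sᵀ)⁻¹ * S) *
    Matrix.of fun i j => simplexGrad f t T (x0 + s i) j - simplexGrad f t T x0 j

lemma aux_le_of_sq_le_sq {a s : ℝ} (ha : 0 ≤ a) (hs : 0 ≤ s) (h : a^2 ≤ s^2) : a ≤ s := by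
  nlinarith [sq_nonneg (a - s), sq_nonneg (a + s)]


lemma coord_le_norm {n : ℕ} (x : EuclideanSpace ℝ (Fin n)) (i : Fin n) : |x i| ≤ ‖x‖ := by
  have h : x i = inner ℝ (EuclideanSpace.single i (1:ℝ)) x := by
    rw [EuclideanSpace.inner_single_left]; simp
  rw [h]
  calc |inner ℝ (EuclideanSpace.single i (1:ℝ)) x| ≤ ‖EuclideanSpace.single i (1:ℝ)‖ * ‖x‖ :=
        abs_real_inner_le_norm _ _
    _ = ‖x‖ := by rw [EuclideanSpace.norm_single]; simp

lemma abs_entry_le_opNorm {m n : ℕ} (A : Matrix (Fin m) (Fin n) ℝ) (i : Fin m) (j : Fin n) :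
    |A i j| ≤ opNorm A := by
  have h : (Matrix.toEuclideanLin A (EuclideanSpace.single j 1)) i = A i j := by
    simp [Matrix.toEuclideanLin_apply, Matrix.mulVec_single]
  calc |A i j| = |(Matrix.toEuclideanLin A (EuclideanSpace.single j 1)) i| := by rw [h]
    _ ≤ ‖Matrix.toEuclideanLin A (EuclideanSpace.single j 1)‖ := coord_le_norm _ i
    _ = ‖LinearMap.toContinuousLinearMap (Matrix.toEuclideanLin A) (EuclideanSpace.single j 1)‖ := rfl
    _ ≤ opNorm A * ‖(EuclideanSpace.single j (1:ℝ))‖ := ContinuousLinearMap.le_opNorm _ _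
    _ = opNorm A := by rw [EuclideanSpace.norm_single]; simp


lemma opNorm_le_of_entries {m n : ℕ} (A : Matrix (Fin m) (Fin n) ℝ) (c : ℝ) (hc : 0 ≤ c)
    (h : ∀ i j, |A i j| ≤ c) :
    opNorm A ≤ Real.sqrt (m * n) * c := by
  apply ContinuousLinearMap.opNorm_le_bound _ (by positivity)
  intro x
  have hsum : (∑ j, |x j|) ≤ Real.sqrt n * ‖x‖ := by
    have h1 : (∑ j, |x j|)^2 ≤ (n : ℝ) * ∑ j, |x j|^2 := by
      simpa using sq_sum_le_card_mul_sum_sq (s := Finset.univ) (f := fun j => |x j|)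
    have h2 : (∑ j, |x j|^2) = ‖x‖^2 := by
      rw [EuclideanSpace.norm_eq, Real.sq_sqrt (by positivity)]
      simp [sq_abs]
    apply aux_le_of_sq_le_sq (Finset.sum_nonneg (fun j _ => abs_nonneg (x j))) (by positivity)
    rw [mul_pow, Real.sq_sqrt (Nat.cast_nonneg n)]
    rw [h2] at h1; exact h1
  have hAx : ∀ i, |(Matrix.toEuclideanLin A x) i| ≤ c * (Real.sqrt n * ‖x‖) := by
    intro i
    have heq : (Matrix.toEuclideanLin A x) i = ∑ j, A i j * x j := by
      simp [Matrix.toEuclideanLin_apply, Matrix.mulVec, dotProduct]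
    rw [heq]
    calc |∑ j, A i j * x j| ≤ ∑ j, |A i j * x j| := Finset.abs_sum_le_sum_abs _ _
      _ ≤ ∑ j, c * |x j| := by
          apply Finset.sum_le_sum; intro j _
          rw [abs_mul]; exact mul_le_mul_of_nonneg_right (h i j) (abs_nonneg _)
      _ = c * ∑ j, |x j| := by rw [Finset.mul_sum]
      _ ≤ c * (Real.sqrt n * ‖x‖) := mul_le_mul_of_nonneg_left hsum hc
  have key : ‖(Matrix.toEuclideanLin A x)‖ ≤ Real.sqrt m * (c * (Real.sqrt n * ‖x‖)) := by
    apply aux_le_of_sq_le_sq (norm_nonneg _) (by positivity)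
    rw [EuclideanSpace.norm_eq, Real.sq_sqrt (by positivity)]
    rw [mul_pow, Real.sq_sqrt (Nat.cast_nonneg m)]
    calc (∑ i, ‖(Matrix.toEuclideanLin A x) i‖^2) ≤ ∑ _i : Fin m, (c * (Real.sqrt n * ‖x‖))^2 := by
          apply Finset.sum_le_sum; intro i _
          rw [Real.norm_eq_abs]
          have := hAx i
          nlinarith [abs_nonneg ((Matrix.toEuclideanLin A x) i)]
      _ = (m:ℝ) * (c * (Real.sqrt n * ‖x‖))^2 := by simp [mul_comm]
  calc ‖LinearMap.toContinuousLinearMap (Matrix.toEuclideanLin A) x‖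
      = ‖(Matrix.toEuclideanLin A x)‖ := rfl
    _ ≤ Real.sqrt m * (c * (Real.sqrt n * ‖x‖)) := key
    _ = Real.sqrt (m*n) * c * ‖x‖ := by
        rw [Real.sqrt_mul (by positivity)]; ring


lemma hess_apply {n : ℕ} (f : EuclideanSpace ℝ (Fin n) → ℝ) (x : EuclideanSpace ℝ (Fin n))
    (i j : Fin n) :
    hess f x i j = fderiv ℝ (fderiv ℝ f) x (EuclideanSpace.single i 1) (EuclideanSpace.single j 1) := by
  show iteratedFDeriv ℝ 2 f x ![EuclideanSpace.single i 1, EuclideanSpace.single j 1] = _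
  rw [iteratedFDeriv_two_apply]
  simp

-- membership lemma


lemma mem_ball_aux {n : ℕ} {x0 : EuclideanSpace ℝ (Fin n)} {Δbar β : ℝ} (hβ : 0 < β)
    {u v : EuclideanSpace ℝ (Fin n)}
    (hi : x0 + β • u ∈ ball x0 Δbar) (hj : x0 + β • v ∈ ball x0 Δbar)
    (hij : x0 + β • u + β • v ∈ ball x0 Δbar)
    {s t : ℝ} (hs : s ∈ Set.Icc 0 β) (ht : t ∈ Set.Icc 0 β) :
    x0 + s • u + t • v ∈ ball x0 Δbar := by
  have h0 : x0 ∈ ball x0 Δbar := by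
    have := Metric.nonempty_ball.mp ⟨_, hi⟩
    exact mem_ball_self this
  have hconv : Convex ℝ (ball x0 Δbar) := convex_ball _ _
  set a := t / β with ha
  have ha0 : 0 ≤ a := div_nonneg ht.1 hβ.le
  have ha1 : a ≤ 1 := div_le_one_of_le₀ ht.2 hβ.le
  have haβ : a * β = t := div_mul_cancel₀ t hβ.ne'
  set b := s / β with hb
  have hb0 : 0 ≤ b := div_nonneg hs.1 hβ.le
  have hb1 : b ≤ 1 := div_le_one_of_le₀ hs.2 hβ.le
  have hbβ : b * β = s := div_mul_cancel₀ s hβ.ne'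
  have q1 : x0 + t • v ∈ ball x0 Δbar := by
    have := hconv h0 hj (sub_nonneg.mpr ha1) ha0 (by ring)
    convert this using 1
    rw [← haβ]; module
  have q2 : x0 + β • u + t • v ∈ ball x0 Δbar := by
    have := hconv hi hij (sub_nonneg.mpr ha1) ha0 (by ring)
    convert this using 1
    rw [← haβ]; module
  have := hconv q1 q2 (sub_nonneg.mpr hb1) hb0 (by ring)
  convert this using 1
  rw [← hbβ]; module


lemma key_matrix {n : ℕ} (β : ℝ) (hβ : 0 < β) :
    ((β • (1 : Matrix (Fin n) (Fin n) ℝ)) * (β • (1 : Matrix (Fin n) (Fin n) ℝ))ᵀ)⁻¹ *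
      (β • (1 : Matrix (Fin n) (Fin n) ℝ)) = β⁻¹ • (1 : Matrix (Fin n) (Fin n) ℝ) := by
  have h1 : ((β • (1 : Matrix (Fin n) (Fin n) ℝ)) * (β • (1 : Matrix (Fin n) (Fin n) ℝ))ᵀ)
      = (β^2) • (1 : Matrix (Fin n) (Fin n) ℝ) := by
    rw [Matrix.transpose_smul, Matrix.transpose_one, Matrix.smul_mul, Matrix.mul_smul, one_mul,
      smul_smul]; ring_nf
  rw [h1]
  have h2 : ((β^2) • (1 : Matrix (Fin n) (Fin n) ℝ))⁻¹ = (β^2)⁻¹ • (1 : Matrix (Fin n) (Fin n) ℝ) := by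
    apply Matrix.inv_eq_right_inv
    rw [Matrix.smul_mul, Matrix.mul_smul, one_mul, smul_smul]
    rw [mul_inv_cancel₀ (by positivity)]
    simp
  rw [h2, Matrix.smul_mul, Matrix.mul_smul, one_mul, smul_smul]
  congr 1
  field_simp


lemma simplexGrad_eq {n : ℕ} (β : ℝ) (f : EuclideanSpace ℝ (Fin n) → ℝ) (y : EuclideanSpace ℝ (Fin n))
    (j : Fin n) (hβ : 0 < β) :
    simplexGrad f (fun j => β • EuclideanSpace.single j 1) (β • (1 : Matrix (Fin n) (Fin n) ℝ)) y j
      = β⁻¹ * (f (y + β • EuclideanSpace.single j 1) - f y) := by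
  unfold simplexGrad
  rw [key_matrix β hβ]
  simp [Matrix.smul_mulVec, Matrix.one_mulVec]


lemma nested_entry {n : ℕ} (β : ℝ) (f : EuclideanSpace ℝ (Fin n) → ℝ) (x0 : EuclideanSpace ℝ (Fin n))
    (i j : Fin n) (hβ : 0 < β) :
    nestedSetHessian f (fun i => β • EuclideanSpace.single i 1) (β • (1 : Matrix (Fin n) (Fin n) ℝ))
      (fun j => β • EuclideanSpace.single j 1) (β • (1 : Matrix (Fin n) (Fin n) ℝ)) x0 i j
    = β⁻¹ * β⁻¹ * (f (x0 + β • EuclideanSpace.single i 1 + β • EuclideanSpace.single j 1)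
        - f (x0 + β • EuclideanSpace.single i 1) - f (x0 + β • EuclideanSpace.single j 1) + f x0) := by
  unfold nestedSetHessian
  rw [key_matrix β hβ, Matrix.smul_mul, Matrix.one_mul]
  simp only [Matrix.smul_apply, Matrix.of_apply, smul_eq_mul]
  rw [simplexGrad_eq β f _ j hβ, simplexGrad_eq β f _ j hβ]
  ring


set_option maxHeartbeats 1600000 in
lemma entry_bound {n : ℕ} (f : EuclideanSpace ℝ (Fin n) → ℝ) (x0 : EuclideanSpace ℝ (Fin n))
    (Δbar L β : ℝ) (hβ : 0 < β)
    (hf : ContDiffOn ℝ 3 f (ball x0 Δbar))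
    (hLip : ∀ y ∈ ball x0 Δbar, ∀ z ∈ ball x0 Δbar,
      opNorm (hess f y - hess f z) ≤ L * ‖y - z‖)
    (i j : Fin n)
    (hi : x0 + β • EuclideanSpace.single i 1 ∈ ball x0 Δbar)
    (hj : x0 + β • EuclideanSpace.single j 1 ∈ ball x0 Δbar)
    (hij : x0 + β • EuclideanSpace.single i 1 + β • EuclideanSpace.single j 1 ∈ ball x0 Δbar) :
    |f (x0 + β • EuclideanSpace.single i 1 + β • EuclideanSpace.single j 1)
      - f (x0 + β • EuclideanSpace.single i 1) - f (x0 + β • EuclideanSpace.single j 1) + f x0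
      - β^2 * hess f x0 i j| ≤ 3/2 * L * β^3 := by
  set B := ball x0 Δbar with hB
  set u := EuclideanSpace.single i (1:ℝ) with hu
  set v := EuclideanSpace.single j (1:ℝ) with hv
  have hnu : ‖u‖ = 1 := by rw [hu, EuclideanSpace.norm_single]; norm_num
  have hnv : ‖v‖ = 1 := by rw [hv, EuclideanSpace.norm_single]; norm_num
  have h0 : x0 ∈ B := by
    have := Metric.nonempty_ball.mp ⟨_, hi⟩
    exact mem_ball_self this
  have hg2 : ContDiffOn ℝ 2 (fderiv ℝ f) B := hf.fderiv_of_isOpen isOpen_ball (by norm_num)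
  have hgd : DifferentiableOn ℝ (fderiv ℝ f) B := hg2.differentiableOn (by norm_num)
  have hfd : DifferentiableOn ℝ f B := hf.differentiableOn (by norm_num)
  have hmem : ∀ s ∈ Set.Icc (0:ℝ) β, ∀ t ∈ Set.Icc (0:ℝ) β, x0 + s • u + t • v ∈ B :=
    fun s hs t ht => mem_ball_aux hβ hi hj hij hs ht
  set H := fderiv ℝ (fderiv ℝ f) x0 u v with hH
  have hHhess : H = hess f x0 i j := (hess_apply f x0 i j).symm
  have entryLip : ∀ x ∈ B, |fderiv ℝ (fderiv ℝ f) x u v - H| ≤ L * ‖x - x0‖ := by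
    intro x hx
    have h1 : fderiv ℝ (fderiv ℝ f) x u v - H = (hess f x - hess f x0) i j := by
      rw [Matrix.sub_apply, hess_apply, hess_apply, hH]
    rw [h1]
    exact (abs_entry_le_opNorm _ i j).trans (hLip x hx x0 h0)
  have hL : 0 ≤ L := by
    have h1 : (0:ℝ) ≤ opNorm (hess f (x0 + β • u) - hess f x0) := norm_nonneg _
    have h2 := hLip _ hi _ h0
    have h3 : ‖x0 + β • u - x0‖ = β := by
      have : x0 + β • u - x0 = β • u := by module
      rw [this, norm_smul, hnu, Real.norm_eq_abs, abs_of_pos hβ, mul_one]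
    rw [h3] at h2
    nlinarith
  -- inner MVT
  have key1 : ∀ t ∈ Set.Icc (0:ℝ) β,
      |(fderiv ℝ f (x0 + β • u + t • v) v - fderiv ℝ f (x0 + t • v) v) - β * H|
        ≤ L * (β + t) * β := by
    intro t ht
    set ψ : ℝ → ℝ := fun s => fderiv ℝ f (x0 + s • u + t • v) v - s * H with hψ
    have hasD : ∀ s ∈ Set.Icc (0:ℝ) β,
        HasDerivAt ψ (fderiv ℝ (fderiv ℝ f) (x0 + s • u + t • v) u v - H) s := by
      intro s hs
      have hp : HasDerivAt (fun s : ℝ => x0 + s • u + t • v) u s := by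
        have h1 : HasDerivAt (fun s : ℝ => s • u) ((1:ℝ) • u) s := (hasDerivAt_id s).smul_const u
        have h2 := (h1.const_add x0).add_const (t • v)
        simpa using h2
      have hx : (x0 + s • u + t • v) ∈ B := hmem s hs t ht
      have hgd' : HasFDerivAt (fderiv ℝ f) (fderiv ℝ (fderiv ℝ f) (x0 + s • u + t • v))
          (x0 + s • u + t • v) := (hgd.differentiableAt (isOpen_ball.mem_nhds hx)).hasFDerivAt
      have hcomp : HasDerivAt (fun s : ℝ => fderiv ℝ f (x0 + s • u + t • v))
          (fderiv ℝ (fderiv ℝ f) (x0 + s • u + t • v) u) s := hgd'.comp_hasDerivAt s hp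
      have happ := hcomp.clm_apply (hasDerivAt_const s v)
      simp only [map_zero, add_zero] at happ
      have hlin : HasDerivAt (fun s : ℝ => s * H) H s := by
        simpa using (hasDerivAt_id s).mul_const H
      exact happ.sub hlin
    have bound : ∀ s ∈ Set.Icc (0:ℝ) β,
        ‖fderiv ℝ (fderiv ℝ f) (x0 + s • u + t • v) u v - H‖ ≤ L * (β + t) := by
      intro s hs
      have hx : (x0 + s • u + t • v) ∈ B := hmem s hs t ht
      have h1 := entryLip _ hx
      have h2 : ‖x0 + s • u + t • v - x0‖ ≤ s + t := by
        have : x0 + s • u + t • v - x0 = s • u + t • v := by module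
        rw [this]
        calc ‖s • u + t • v‖ ≤ ‖s • u‖ + ‖t • v‖ := norm_add_le _ _
          _ = |s| * 1 + |t| * 1 := by rw [norm_smul, norm_smul, hnu, hnv]; simp
          _ = s + t := by rw [abs_of_nonneg hs.1, abs_of_nonneg ht.1]; ring
      calc ‖fderiv ℝ (fderiv ℝ f) (x0 + s • u + t • v) u v - H‖
          ≤ L * ‖x0 + s • u + t • v - x0‖ := h1
        _ ≤ L * (s + t) := by exact mul_le_mul_of_nonneg_left h2 hL
        _ ≤ L * (β + t) := by apply mul_le_mul_of_nonneg_left _ hL; linarith [hs.2]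
    have mvt := (convex_Icc (0:ℝ) β).norm_image_sub_le_of_norm_hasDerivWithin_le
      (fun s hs => (hasD s hs).hasDerivWithinAt) bound (Set.left_mem_Icc.mpr hβ.le)
      (Set.right_mem_Icc.mpr hβ.le)
    have hψβ : ψ β - ψ 0 = (fderiv ℝ f (x0 + β • u + t • v) v - fderiv ℝ f (x0 + t • v) v) - β * H := by
      simp only [hψ, zero_smul, add_zero, zero_mul, sub_zero]
      ring
    rw [hψβ] at mvt
    rw [Real.norm_eq_abs] at mvt
    calc |(fderiv ℝ f (x0 + β • u + t • v) v - fderiv ℝ f (x0 + t • v) v) - β * H|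
        ≤ L * (β + t) * ‖(β:ℝ) - 0‖ := mvt
      _ = L * (β + t) * β := by rw [sub_zero, Real.norm_eq_abs, abs_of_pos hβ]
  -- outer FTC
  set Φ : ℝ → ℝ := fun t => f (x0 + β • u + t • v) - f (x0 + t • v) with hΦ
  set Φ' : ℝ → ℝ := fun t => fderiv ℝ f (x0 + β • u + t • v) v - fderiv ℝ f (x0 + t • v) v with hΦ'
  have hβIcc : β ∈ Set.Icc (0:ℝ) β := Set.right_mem_Icc.mpr hβ.le
  have h0Icc : (0:ℝ) ∈ Set.Icc (0:ℝ) β := Set.left_mem_Icc.mpr hβ.le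
  have hmem1 : ∀ t ∈ Set.Icc (0:ℝ) β, x0 + β • u + t • v ∈ B := fun t ht => hmem β hβIcc t ht
  have hmem0 : ∀ t ∈ Set.Icc (0:ℝ) β, x0 + t • v ∈ B := by
    intro t ht
    have := hmem 0 h0Icc t ht
    simpa using this
  have hasDΦ : ∀ t ∈ Set.uIcc (0:ℝ) β, HasDerivAt Φ (Φ' t) t := by
    intro t ht'
    rw [Set.uIcc_of_le hβ.le] at ht'
    have hp1 : HasDerivAt (fun t : ℝ => x0 + β • u + t • v) v t := by
      have h1 : HasDerivAt (fun t : ℝ => t • v) ((1:ℝ) • v) t := (hasDerivAt_id t).smul_const v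
      simpa using h1.const_add (x0 + β • u)
    have hp0 : HasDerivAt (fun t : ℝ => x0 + t • v) v t := by
      have h1 : HasDerivAt (fun t : ℝ => t • v) ((1:ℝ) • v) t := (hasDerivAt_id t).smul_const v
      simpa using h1.const_add x0
    have hfd1 : HasFDerivAt f (fderiv ℝ f (x0 + β • u + t • v)) (x0 + β • u + t • v) :=
      (hfd.differentiableAt (isOpen_ball.mem_nhds (hmem1 t ht'))).hasFDerivAt
    have hfd0 : HasFDerivAt f (fderiv ℝ f (x0 + t • v)) (x0 + t • v) :=
      (hfd.differentiableAt (isOpen_ball.mem_nhds (hmem0 t ht'))).hasFDerivAt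
    exact (hfd1.comp_hasDerivAt t hp1).sub (hfd0.comp_hasDerivAt t hp0)
  have hcontΦ' : ContinuousOn Φ' (Set.uIcc (0:ℝ) β) := by
    rw [Set.uIcc_of_le hβ.le]
    have hgc : ContinuousOn (fderiv ℝ f) B := hg2.continuousOn
    have c1 : Continuous (fun t : ℝ => x0 + β • u + t • v) := by continuity
    have c0 : Continuous (fun t : ℝ => x0 + t • v) := by continuity
    have m1 : Set.MapsTo (fun t : ℝ => x0 + β • u + t • v) (Set.Icc 0 β) B := hmem1
    have m0 : Set.MapsTo (fun t : ℝ => x0 + t • v) (Set.Icc 0 β) B := hmem0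
    exact ((hgc.comp c1.continuousOn m1).clm_apply continuousOn_const).sub
      ((hgc.comp c0.continuousOn m0).clm_apply continuousOn_const)
  have hint : IntervalIntegrable Φ' MeasureTheory.volume 0 β := hcontΦ'.intervalIntegrable
  have hFTC : ∫ t in (0:ℝ)..β, Φ' t = Φ β - Φ 0 :=
    intervalIntegral.integral_eq_sub_of_hasDerivAt hasDΦ hint
  have hsub : ∫ t in (0:ℝ)..β, (Φ' t - β * H) = (Φ β - Φ 0) - β * (β * H) := by
    rw [intervalIntegral.integral_sub hint intervalIntegrable_const, hFTC,
      intervalIntegral.integral_const]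
    simp
  have hbound : ‖∫ t in (0:ℝ)..β, (Φ' t - β * H)‖ ≤ |∫ t in (0:ℝ)..β, L * (β + t) * β| := by
    apply intervalIntegral.norm_integral_le_abs_of_norm_le
    · filter_upwards [MeasureTheory.ae_restrict_mem measurableSet_uIoc] with t ht
      rw [Set.uIoc_of_le hβ.le] at ht
      have ht' : t ∈ Set.Icc (0:ℝ) β := ⟨ht.1.le, ht.2⟩
      rw [Real.norm_eq_abs]
      exact key1 t ht'
    · apply Continuous.intervalIntegrable
      continuity
  have hval : ∫ t in (0:ℝ)..β, L * (β + t) * β = 3/2 * L * β^3 := by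
    have heq : (fun t : ℝ => L * (β + t) * β) = fun t => L * β * β + (L * β) * t := by
      funext t; ring
    rw [heq, intervalIntegral.integral_add (g := fun t : ℝ => L * β * t) intervalIntegrable_const
      ((continuous_const.mul continuous_id').intervalIntegrable 0 β),
      intervalIntegral.integral_const, intervalIntegral.integral_const_mul, integral_id]
    simp
    ring
  have final : |Φ β - Φ 0 - β * (β * H)| ≤ 3/2 * L * β^3 := by
    rw [← hsub]
    calc |∫ t in (0:ℝ)..β, (Φ' t - β * H)| ≤ |∫ t in (0:ℝ)..β, L * (β + t) * β| := hbound
      _ = 3/2 * L * β^3 := by rw [hval, abs_of_nonneg (by positivity)]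
  have hΦβ : Φ β = f (x0 + β • u + β • v) - f (x0 + β • v) := rfl
  have hΦ0 : Φ 0 = f (x0 + β • u) - f x0 := by
    simp only [hΦ, zero_smul, add_zero]
  rw [hΦβ, hΦ0] at final
  rw [← hHhess]
  calc |f (x0 + β • u + β • v) - f (x0 + β • u) - f (x0 + β • v) + f x0 - β^2 * H|
      = |f (x0 + β • u + β • v) - f (x0 + β • v) - (f (x0 + β • u) - f x0) - β * (β * H)| := by
        ring_nf
    _ ≤ 3/2 * L * β^3 := final


set_option maxHeartbeats 1600000 in
/-- with S = T = β·Id, the nested-set Hessian satisfies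
‖∇²_s f(x⁰;β Id, β Id) − ∇²f(x⁰)‖ ≤ (5/3) n^{3/2} L β. -/
theorem nested_set_hessian_error_bound_beta_id {n : ℕ}
    (f : EuclideanSpace ℝ (Fin n) → ℝ) (x0 : EuclideanSpace ℝ (Fin n))
    (Δbar L β : ℝ) (hβ : 0 < β)
    (hf : ContDiffOn ℝ 3 f (ball x0 Δbar))
    (hLip : ∀ y ∈ ball x0 Δbar, ∀ z ∈ ball x0 Δbar,
      opNorm (hess f y - hess f z) ≤ L * ‖y - z‖)
    (hpts1 : ∀ i : Fin n, x0 + β • EuclideanSpace.single i 1 ∈ ball x0 Δbar)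
    (hpts2 : ∀ i j : Fin n,
      x0 + β • EuclideanSpace.single i 1 + β • EuclideanSpace.single j 1
        ∈ ball x0 Δbar) :
    opNorm (nestedSetHessian f
        (fun i => β • EuclideanSpace.single i 1) (β • (1 : Matrix (Fin n) (Fin n) ℝ))
        (fun j => β • EuclideanSpace.single j 1) (β • (1 : Matrix (Fin n) (Fin n) ℝ))
        x0 - hess f x0)
      ≤ 5 / 3 * ((n : ℝ) * Real.sqrt n) * L * β := by
  rcases Nat.eq_zero_or_pos n with hn | hn
  · subst hn
    have h := opNorm_le_of_entries (nestedSetHessian f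
        (fun i => β • EuclideanSpace.single i 1) (β • (1 : Matrix (Fin 0) (Fin 0) ℝ))
        (fun j => β • EuclideanSpace.single j 1) (β • (1 : Matrix (Fin 0) (Fin 0) ℝ))
        x0 - hess f x0) 0 le_rfl (fun i _ => i.elim0)
    simpa using h
  · have i0 : Fin n := ⟨0, hn⟩
    have h0 : x0 ∈ ball x0 Δbar := by
      have := Metric.nonempty_ball.mp ⟨_, hpts1 i0⟩
      exact mem_ball_self this
    have hL : 0 ≤ L := by
      have h1 : (0:ℝ) ≤ opNorm (hess f (x0 + β • EuclideanSpace.single i0 1) - hess f x0) :=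
        norm_nonneg _
      have h2 := hLip _ (hpts1 i0) _ h0
      have h3 : ‖x0 + β • EuclideanSpace.single i0 1 - x0‖ = β := by
        have h4 : x0 + β • EuclideanSpace.single i0 1 - x0 = β • EuclideanSpace.single i0 1 := by
          module
        rw [h4, norm_smul, EuclideanSpace.norm_single, Real.norm_eq_abs, abs_of_pos hβ]
        norm_num
      rw [h3] at h2
      nlinarith
    have hentry : ∀ i j : Fin n,
        |(nestedSetHessian f
          (fun i => β • EuclideanSpace.single i 1) (β • (1 : Matrix (Fin n) (Fin n) ℝ))
          (fun j => β • EuclideanSpace.single j 1) (β • (1 : Matrix (Fin n) (Fin n) ℝ))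
          x0 - hess f x0) i j| ≤ 3/2 * L * β := by
      intro i j
      rw [Matrix.sub_apply, nested_entry β f x0 i j hβ]
      have hD := entry_bound f x0 Δbar L β hβ hf hLip i j (hpts1 i) (hpts1 j) (hpts2 i j)
      set D := f (x0 + β • EuclideanSpace.single i 1 + β • EuclideanSpace.single j 1)
        - f (x0 + β • EuclideanSpace.single i 1) - f (x0 + β • EuclideanSpace.single j 1)
        + f x0 with hDdef
      have heq : β⁻¹ * β⁻¹ * D - hess f x0 i j = β⁻¹ * β⁻¹ * (D - β^2 * hess f x0 i j) := by
        field_simp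
      rw [heq, abs_mul]
      have h5 : |β⁻¹ * β⁻¹| = β⁻¹ * β⁻¹ := abs_of_pos (by positivity)
      rw [h5]
      calc β⁻¹ * β⁻¹ * |D - β^2 * hess f x0 i j| ≤ β⁻¹ * β⁻¹ * (3/2 * L * β^3) := by
            apply mul_le_mul_of_nonneg_left hD (by positivity)
        _ = 3/2 * L * β := by field_simp
    have hop := opNorm_le_of_entries _ (3/2 * L * β) (by positivity) hentry
    have hsqrt : Real.sqrt ((n:ℝ) * (n:ℝ)) = (n:ℝ) := Real.sqrt_mul_self (Nat.cast_nonneg n)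
    have h1n : (1:ℝ) ≤ Real.sqrt n := by
      rw [show (1:ℝ) = Real.sqrt 1 from (Real.sqrt_one).symm]
      exact Real.sqrt_le_sqrt (by exact_mod_cast hn)
    have hn1 : (1:ℝ) ≤ (n:ℝ) := by exact_mod_cast hn
    calc opNorm _ ≤ Real.sqrt ((n:ℝ) * (n:ℝ)) * (3/2 * L * β) := hop
      _ = (n:ℝ) * (3/2 * L * β) := by rw [hsqrt]
      _ ≤ 5 / 3 * ((n : ℝ) * Real.sqrt n) * L * β := by
          have hab : (n:ℝ) ≤ (n:ℝ) * Real.sqrt n := by nlinarith [h1n, hn1]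
          have hP : (0:ℝ) ≤ L * β := mul_nonneg hL hβ.le
          nlinarith [mul_le_mul_of_nonneg_right hab hP,
            mul_nonneg (Nat.cast_nonneg n : (0:ℝ) ≤ (n:ℝ)) hP]
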